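/- If a₁, a₂ > 1 are coprime positive integers, then the number of natural numbers not representable as x₁a₁ + x₂a₂ with x₁, x₂ ∈ ℕ equals (a₁-1)(a₂-1)/2. -/

import Mathlib

private lemma syl_arith (A B C D E z m n : ℕ)
    (e1 : B + A + m = C) (e2 : A - z = E) (e3 : E = n + D) (hge : z + n ≤ A) :
    C - m - n - z = B + D := by omega

/-- If `z ≤ mn - m - n` is not representable, then `mn - m - n - z` is. -/
private lemma syl_compl (m n : ℕ) (hm : 1 < m) (hn : 1 < n) (cop : Nat.Coprime m n)
    (z : ℕ) (hnp : ¬∃ x1 x2 : ℕ, z = x1 * m + x2 * n) :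
    ∃ x1 x2 : ℕ, m * n - m - n - z = x1 * m + x2 * n := by
  haveI : NeZero n := ⟨by omega⟩
  have hunit : IsUnit (m : ZMod n) := (ZMod.isUnit_iff_coprime m n).mpr cop
  set x1 : ℕ := ((z : ZMod n) * (m : ZMod n)⁻¹).val with hx1def
  have hx1lt : x1 < n := ZMod.val_lt _
  have hcast : ((x1 * m : ℕ) : ZMod n) = (z : ZMod n) := by
    push_cast [hx1def, ZMod.natCast_val, ZMod.cast_id]
    rw [mul_assoc, ZMod.inv_mul_of_unit _ hunit, mul_one]
  have hmod : x1 * m ≡ z [MOD n] := (ZMod.natCast_eq_natCast_iff _ _ _).mp hcast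
  have hlt : z < x1 * m := by
    by_contra h
    push_neg at h
    obtain ⟨k, hk⟩ := (Nat.modEq_iff_dvd' h).mp hmod
    exact hnp ⟨x1, k, by rw [mul_comm k n, ← hk, Nat.add_sub_cancel' h]⟩
  obtain ⟨k, hk⟩ := (Nat.modEq_iff_dvd' hlt.le).mp hmod.symm
  have hkpos : 1 ≤ k := by
    rcases Nat.eq_zero_or_pos k with h0 | h0
    · subst h0; rw [mul_zero] at hk; omega
    · exact h0
  obtain ⟨k', rfl⟩ : ∃ k', k = k' + 1 := ⟨k - 1, by omega⟩
  have hge : z + n ≤ x1 * m := by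
    have : n ≤ x1 * m - z := by
      rw [hk]; exact Nat.le_mul_of_pos_right n (by omega)
    omega
  refine ⟨n - 1 - x1, k', ?_⟩
  have e1 : (n - 1 - x1) * m + x1 * m + m = m * n := by
    have h' : (n - 1 - x1) * m + x1 * m + m = ((n - 1 - x1) + x1 + 1) * m := by ring
    have h'' : (n - 1 - x1) + x1 + 1 = n := by omega
    rw [h', h'', mul_comm]
  have e3 : n * (k' + 1) = n + k' * n := by ring
  exact syl_arith (x1 * m) ((n - 1 - x1) * m) (m * n) (k' * n) (n * (k' + 1)) z m n
    e1 hk e3 hge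

theorem sylvester_count (a1 a2 : ℕ) (h1 : 1 < a1) (h2 : 1 < a2)
    (hcop : Nat.Coprime a1 a2) :
    {z : ℕ | ¬∃ x1 x2 : ℕ, z = x1 * a1 + x2 * a2}.ncard
      = (a1 - 1) * (a2 - 1) / 2 := by
  classical
  set F := a1 * a2 - a1 - a2 with hF
  set P : ℕ → Prop := fun z => ∃ x1 x2 : ℕ, z = x1 * a1 + x2 * a2 with hP
  have hfrob := frobeniusNumber_pair hcop h1 h2
  have hmemiff : ∀ z : ℕ, z ∈ AddSubmonoid.closure ({a1, a2} : Set ℕ) ↔ P z := by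
    intro z
    rw [AddSubmonoid.mem_closure_pair]
    constructor
    · rintro ⟨a, b, hab⟩; exact ⟨a, b, by simp only [smul_eq_mul] at hab; omega⟩
    · rintro ⟨a, b, hab⟩; exact ⟨a, b, by simp only [smul_eq_mul]; omega⟩
  have hnPF : ¬ P F := fun h => hfrob.1 ((hmemiff F).mpr h)
  have hmax : ∀ z : ℕ, ¬ P z → z ≤ F := by
    intro z hz
    exact hfrob.2 (fun h => hz ((hmemiff z).mp h))
  have hadd : ∀ a b : ℕ, P a → P b → P (a + b) := by
    rintro a b ⟨x1, x2, rfl⟩ ⟨y1, y2, rfl⟩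
    exact ⟨x1 + y1, x2 + y2, by ring⟩
  -- the set equals a finset
  set T : Finset ℕ := (Finset.range (F + 1)).filter (fun z => ¬ P z) with hT
  set T' : Finset ℕ := (Finset.range (F + 1)).filter (fun z => P z) with hT'
  have hset : {z : ℕ | ¬∃ x1 x2 : ℕ, z = x1 * a1 + x2 * a2} = (T : Set ℕ) := by
    ext z
    simp only [Set.mem_setOf_eq, hT, Finset.coe_filter, Finset.mem_range,
      Set.mem_setOf_eq]
    constructor
    · intro h; exact ⟨Nat.lt_succ_of_le (hmax z h), h⟩
    · intro h; exact h.2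
  rw [hset, Set.ncard_coe_finset]
  -- bijection between T and T'
  have hcard : T.card = T'.card := by
    apply Finset.card_nbij' (i := fun z => F - z) (j := fun z => F - z)
    · intro z hz
      simp only [hT, Finset.mem_filter, Finset.mem_range, Finset.mem_coe] at hz
      simp only [hT', Finset.mem_filter, Finset.mem_range, Finset.mem_coe]
      exact ⟨by omega, syl_compl a1 a2 h1 h2 hcop z hz.2⟩
    · intro z hz
      simp only [hT', Finset.mem_filter, Finset.mem_range, Finset.mem_coe] at hz
      simp only [hT, Finset.mem_filter, Finset.mem_range, Finset.mem_coe]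
      refine ⟨by omega, fun hPFz => ?_⟩
      have : P F := by
        have := hadd z (F - z) hz.2 hPFz
        rwa [Nat.add_sub_cancel' (by omega)] at this
      exact hnPF this
    · intro z hz
      simp only [hT, Finset.mem_filter, Finset.mem_range, Finset.mem_coe] at hz
      dsimp only; omega
    · intro z hz
      simp only [hT', Finset.mem_filter, Finset.mem_range, Finset.mem_coe] at hz
      dsimp only; omega
  have hsum : T'.card + T.card = F + 1 := by
    rw [hT', hT]
    have h := Finset.card_filter_add_card_filter_not
      (s := Finset.range (F + 1)) (p := fun z => P z)
    rw [Finset.card_range] at h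
    exact h
  have hkey : F + 1 = (a1 - 1) * (a2 - 1) := by
    obtain ⟨a, rfl⟩ : ∃ a, a1 = a + 2 := ⟨a1 - 2, by omega⟩
    obtain ⟨b, rfl⟩ : ∃ b, a2 = b + 2 := ⟨a2 - 2, by omega⟩
    have e1 : (a + 2) * (b + 2) = a * b + 2 * a + 2 * b + 4 := by ring
    have e2 : (a + 2 - 1) * (b + 2 - 1) = a * b + a + b + 1 := by
      have : (a + 1) * (b + 1) = a * b + a + b + 1 := by ring
      simpa using this
    rw [hF, e1, e2]
    generalize a * b = c
    omega
  omega
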